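/- Let (Ω, 𝓕, P) be a probability space, let T, R : Ω → ℝ be independent random variables, let h : ℝ → ℝ be bounded and measurable, and define Γ(t) = P(R ≥ t). Assume Γ(T(ω)) > 0 for P-almost every ω and that ω ↦ 1{T(ω) ≤ R(ω)}·h(T(ω))/Γ(T(ω)) is P-integrable. Then for every u ∈ ℝ: E[ 1{T ≤ R}·1{u ≤ T}·1{u ≤ R}·h(T)/Γ(T) ] = E[ h(T)·1{u ≤ T} ]. -/

import Mathlib

open MeasureTheory ProbabilityTheory

/-- IPCW unbiasedness identity. For independent real random variables `T, R`
on a probability space `(Ω, 𝓕, P)`, bounded measurable `h : ℝ → ℝ`, `Γ(t) = P(R ≥ t)`,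
with `Γ(T) > 0` a.s. and `1{T ≤ R}·h(T)/Γ(T)` integrable, for every `u ∈ ℝ`:
`E[1{T ≤ R}·1{u ≤ T}·1{u ≤ R}·h(T)/Γ(T)] = E[h(T)·1{u ≤ T}]`. -/
theorem stmt_11
    {Ω : Type*} [MeasurableSpace Ω] (P : Measure Ω) [IsProbabilityMeasure P]
    (T R : Ω → ℝ) (hT : Measurable T) (hR : Measurable R)
    (hindep : IndepFun T R P)
    (h : ℝ → ℝ) (hh_meas : Measurable h) (hh_bdd : ∃ M, ∀ x, |h x| ≤ M)
    (Γ : ℝ → ℝ) (hΓ : ∀ t, Γ t = (P {ω | t ≤ R ω}).toReal)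
    (hΓpos : ∀ᵐ ω ∂P, 0 < Γ (T ω))
    (hw_int : Integrable
      (fun ω => (if T ω ≤ R ω then (1 : ℝ) else 0) * h (T ω) / Γ (T ω)) P) :
    ∀ u : ℝ,
      (∫ ω, (if T ω ≤ R ω then (1 : ℝ) else 0) * (if u ≤ T ω then (1 : ℝ) else 0)
          * (if u ≤ R ω then (1 : ℝ) else 0) * h (T ω) / Γ (T ω) ∂P)
        = ∫ ω, h (T ω) * (if u ≤ T ω then (1 : ℝ) else 0) ∂P := by
  intro u
  set g : ℝ → ℝ := fun t => h t * (if u ≤ t then (1:ℝ) else 0) with hg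
  have hΓ_anti : Antitone Γ := by
    intro s t hst
    rw [hΓ, hΓ]
    exact ENNReal.toReal_mono (measure_ne_top _ _)
      (measure_mono (fun ω hw => le_trans hst hw))
  have hΓ_meas : Measurable Γ := hΓ_anti.measurable
  have hΓ_nonneg : ∀ t, 0 ≤ Γ t := fun t => by rw [hΓ]; exact ENNReal.toReal_nonneg
  have hg_meas : Measurable g :=
    hh_meas.mul (Measurable.ite (measurableSet_le measurable_const measurable_id)
      measurable_const measurable_const)
  -- pointwise rewrite of LHS integrand
  have hpt : ∀ ω, (if T ω ≤ R ω then (1:ℝ) else 0) * (if u ≤ T ω then (1:ℝ) else 0)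
      * (if u ≤ R ω then (1:ℝ) else 0) * h (T ω) / Γ (T ω)
      = (if T ω ≤ R ω then (1:ℝ) else 0) * g (T ω) / Γ (T ω) := by
    intro ω
    by_cases h1 : T ω ≤ R ω
    · by_cases h2 : u ≤ T ω
      · have h3 : u ≤ R ω := h2.trans h1
        simp only [hg, if_pos h1, if_pos h2, if_pos h3]
        ring
      · simp [hg, h2]
    · simp [h1]
  rw [integral_congr_ae (Filter.Eventually.of_forall hpt)]
  -- the product-space function
  set F : ℝ × ℝ → ℝ := fun p => (if p.1 ≤ p.2 then (1:ℝ) else 0) * g p.1 / Γ p.1 with hF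
  have hF_meas : Measurable F := by
    apply Measurable.div
    · exact (Measurable.ite (measurableSet_le measurable_fst measurable_snd)
        measurable_const measurable_const).mul (hg_meas.comp measurable_fst)
    · exact hΓ_meas.comp measurable_fst
  set μ := P.map T with hμ
  set ν := P.map R with hν
  have hprod : P.map (fun ω => (T ω, R ω)) = μ.prod ν :=
    (indepFun_iff_map_prod_eq_prod_map_map hT.aemeasurable hR.aemeasurable).mp hindep
  -- integrability of F ∘ pair
  have hcomp_int : Integrable (fun ω => F (T ω, R ω)) P := by
    apply hw_int.mono
    · exact (hF_meas.comp (hT.prodMk hR)).aestronglyMeasurable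
    · filter_upwards with ω
      simp only [hF, hg, Real.norm_eq_abs]
      rw [abs_div, abs_div]
      have hnum : |(if T ω ≤ R ω then (1:ℝ) else 0) * (h (T ω) * if u ≤ T ω then (1:ℝ) else 0)|
          ≤ |(if T ω ≤ R ω then (1:ℝ) else 0) * h (T ω)| := by
        by_cases h2 : u ≤ T ω
        · simp [h2]
        · simp [h2, abs_nonneg]
      rcases (hΓ_nonneg (T ω)).eq_or_lt with h0 | h0
      · rw [← h0]; simp
      · rw [abs_of_pos h0]
        exact div_le_div_of_nonneg_right hnum h0.le
  -- transport to product measure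
  have hF_int : Integrable F (μ.prod ν) := by
    rw [← hprod]
    exact (integrable_map_measure hF_meas.aestronglyMeasurable
      (hT.prodMk hR).aemeasurable).mpr hcomp_int
  have step1 : ∫ ω, (if T ω ≤ R ω then (1:ℝ) else 0) * g (T ω) / Γ (T ω) ∂P
      = ∫ p, F p ∂(μ.prod ν) := by
    rw [← hprod, integral_map (hT.prodMk hR).aemeasurable hF_meas.aestronglyMeasurable]
  rw [step1, MeasureTheory.integral_prod F hF_int]
  -- compute inner integral
  have inner : ∀ x : ℝ, (∫ y, F (x, y) ∂ν) = (g x / Γ x) * Γ x := by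
    intro x
    have : ∀ y : ℝ, F (x, y) = (g x / Γ x) * (if x ≤ y then (1:ℝ) else 0) := by
      intro y; simp only [hF]; ring
    simp_rw [this]
    rw [integral_const_mul]
    congr 1
    have hind : (fun y : ℝ => if x ≤ y then (1:ℝ) else 0)
        = Set.indicator (Set.Ici x) (1 : ℝ → ℝ) := by
      funext y
      simp [Set.indicator_apply, Set.mem_Ici]
    rw [hind, integral_indicator_one measurableSet_Ici, hν, measureReal_def,
      Measure.map_apply hR measurableSet_Ici, hΓ]
    rfl
  simp_rw [inner]
  -- a.e. positivity of Γ under μ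
  have hμpos : ∀ᵐ x ∂μ, 0 < Γ x := by
    have hs : MeasurableSet {x : ℝ | 0 < Γ x} := hΓ_meas measurableSet_Ioi
    exact (ae_map_iff hT.aemeasurable hs).mpr hΓpos
  have hae : (fun x => (g x / Γ x) * Γ x) =ᵐ[μ] g := by
    filter_upwards [hμpos] with x hx
    exact div_mul_cancel₀ (g x) hx.ne'
  rw [integral_congr_ae hae, hμ,
    integral_map hT.aemeasurable hg_meas.aestronglyMeasurable]
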